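/- arXiv:1812.10507 — 3 statements merged into one kernel-verified Lean document; each statement's English description precedes it below -/
import Mathlib

section
/- The constant c = (1/π) ∫_{-π}^{π} (-cos φ + 2 - sqrt((cos φ - 2)^2 - 1)) · sin^2 φ dφ equals 2(1 - 8/(3π)). -/
open Real intervalIntegral

noncomputable def myF (φ : ℝ) : ℝ :=
  φ - Real.sin φ * Real.cos φ - (Real.sin φ)^3/3
    + (4 - (Real.cos φ - 1)^2) ^ ((3:ℝ)/2) / 3

lemma u_nonneg (φ : ℝ) : 0 ≤ 4 - (Real.cos φ - 1)^2 := by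
  nlinarith [Real.neg_one_le_cos φ, Real.cos_le_one φ]

lemma sqrt_eq_on (φ : ℝ) (hs : 0 ≤ Real.sin φ) :
    Real.sin φ * (1 - Real.cos φ) * Real.sqrt (4 - (Real.cos φ - 1)^2)
      = Real.sqrt ((Real.cos φ - 2)^2 - 1) * (Real.sin φ)^2 := by
  set c := Real.cos φ with hc
  have hc1 : -1 ≤ c := Real.neg_one_le_cos φ
  have hc2 : c ≤ 1 := Real.cos_le_one φ
  have h1 : (0:ℝ) ≤ 1 - c := by linarith
  have h2 : (0:ℝ) ≤ 1 + c := by linarith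
  have h3 : (0:ℝ) ≤ 3 - c := by linarith
  have hsin : Real.sin φ = Real.sqrt (1 - c) * Real.sqrt (1 + c) := by
    rw [← Real.sqrt_mul h1]
    rw [show (1-c)*(1+c) = Real.sin φ ^ 2 by
      have := Real.sin_sq_add_cos_sq φ; nlinarith]
    exact (Real.sqrt_sq hs).symm
  have e1 : Real.sqrt ((c - 2)^2 - 1) = Real.sqrt (1 - c) * Real.sqrt (3 - c) := by
    rw [← Real.sqrt_mul h1]; ring_nf
  have e2 : Real.sqrt (4 - (c - 1)^2) = Real.sqrt (1 + c) * Real.sqrt (3 - c) := by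
    rw [← Real.sqrt_mul h2]; ring_nf
  have s1 : Real.sqrt (1 - c) ^ 2 = 1 - c := Real.sq_sqrt h1
  have s2 : Real.sqrt (1 + c) ^ 2 = 1 + c := Real.sq_sqrt h2
  rw [e1, e2, hsin]
  linear_combination (-(Real.sqrt (1-c)) * (Real.sqrt (1+c))^2 * Real.sqrt (3-c)) * s1

lemma hasDeriv_myF (φ : ℝ) (hs : 0 ≤ Real.sin φ) :
    HasDerivAt myF
      ((-Real.cos φ + 2 - Real.sqrt ((Real.cos φ - 2)^2 - 1)) * (Real.sin φ)^2) φ := by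
  have hu : HasDerivAt (fun x => 4 - (Real.cos x - 1)^2)
      (2 * Real.sin φ * (Real.cos φ - 1)) φ := by
    have h1 : HasDerivAt (fun x => (Real.cos x - 1)^2)
        (2 * (Real.cos φ - 1) * (-Real.sin φ)) φ := by
      have := ((Real.hasDerivAt_cos φ).sub_const 1)
      simpa using (this.fun_pow 2)
    have := (hasDerivAt_const φ (4:ℝ)).sub h1
    exact this.congr_deriv (by ring)
  have hrpow : HasDerivAt (fun x => (4 - (Real.cos x - 1)^2) ^ ((3:ℝ)/2))
      ((3:ℝ)/2 * (4 - (Real.cos φ - 1)^2) ^ ((3:ℝ)/2 - 1) * (2 * Real.sin φ * (Real.cos φ - 1))) φ := by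
    exact (Real.hasDerivAt_rpow_const (p := (3:ℝ)/2) (Or.inr (by norm_num))).comp φ hu
  have hsub : ((3:ℝ)/2 * (4 - (Real.cos φ - 1)^2) ^ ((3:ℝ)/2 - 1) * (2 * Real.sin φ * (Real.cos φ - 1)))
      = 3 * (Real.sin φ * (Real.cos φ - 1) * Real.sqrt (4 - (Real.cos φ - 1)^2)) := by
    rw [show (3:ℝ)/2 - 1 = (1:ℝ)/2 by norm_num,
      ← Real.sqrt_eq_rpow]
    ring
  rw [hsub] at hrpow
  have h1 : HasDerivAt (fun x : ℝ => x) 1 φ := hasDerivAt_id φ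
  have h2 : HasDerivAt (fun x => Real.sin x * Real.cos x)
      (Real.cos φ * Real.cos φ + Real.sin φ * (-Real.sin φ)) φ :=
    (Real.hasDerivAt_sin φ).mul (Real.hasDerivAt_cos φ)
  have h3 : HasDerivAt (fun x => (Real.sin x)^3 / 3)
      (3 * Real.sin φ ^ 2 * Real.cos φ / 3) φ := by
    exact ((Real.hasDerivAt_sin φ).pow 3).div_const 3
  have := ((h1.sub h2).sub h3).add (hrpow.div_const 3)
  have key := sqrt_eq_on φ hs
  refine this.congr_deriv ?_
  have hpy := Real.sin_sq_add_cos_sq φ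
  nlinarith [key]

theorem constant_c_value :
    (1/Real.pi) * ∫ φ in (-Real.pi)..Real.pi,
      (-Real.cos φ + 2 - Real.sqrt ((Real.cos φ - 2)^2 - 1)) * (Real.sin φ)^2 =
      2 * (1 - 8/(3*Real.pi)) := by
  set f : ℝ → ℝ := fun φ =>
    (-Real.cos φ + 2 - Real.sqrt ((Real.cos φ - 2)^2 - 1)) * (Real.sin φ)^2 with hf
  have hcont : Continuous f := by
    apply Continuous.mul
    · apply Continuous.sub
      · continuity
      · exact Real.continuous_sqrt.comp (by continuity)
    · continuity
  have hint : ∀ a b : ℝ, IntervalIntegrable f MeasureTheory.volume a b :=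
    fun a b => hcont.intervalIntegrable a b
  have heven : ∀ x, f (-x) = f x := by
    intro x; simp [hf, Real.cos_neg, Real.sin_neg]
  have hsplit : (∫ φ in (-Real.pi)..Real.pi, f φ) = 2 * ∫ φ in (0:ℝ)..Real.pi, f φ := by
    have h1 : (∫ φ in (-Real.pi)..(0:ℝ), f φ) + (∫ φ in (0:ℝ)..Real.pi, f φ)
        = ∫ φ in (-Real.pi)..Real.pi, f φ :=
      integral_add_adjacent_intervals (hint _ _) (hint _ _)
    have h2 : (∫ φ in (-Real.pi)..(0:ℝ), f φ) = ∫ φ in (0:ℝ)..Real.pi, f φ := by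
      have h3 := intervalIntegral.integral_comp_neg (a := -Real.pi) (b := 0) f
      simp only [heven, neg_zero, neg_neg] at h3
      exact h3
    linarith
  have hval : (∫ φ in (0:ℝ)..Real.pi, f φ) = Real.pi - 8/3 := by
    have hderiv : ∀ x ∈ Set.uIcc (0:ℝ) Real.pi, HasDerivAt myF (f x) x := by
      intro x hx
      rw [Set.uIcc_of_le Real.pi_pos.le] at hx
      exact hasDeriv_myF x (Real.sin_nonneg_of_nonneg_of_le_pi hx.1 hx.2)
    rw [intervalIntegral.integral_eq_sub_of_hasDerivAt hderiv (hint _ _)]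
    have h0 : myF 0 = 8/3 := by
      have h4 : ((4:ℝ)) ^ ((3:ℝ)/2) = 8 := by
        rw [show (4:ℝ) = 2^(2:ℕ) by norm_num, ← Real.rpow_natCast 2 2,
          ← Real.rpow_mul (by norm_num)]
        rw [show ((2:ℕ):ℝ) * (3/2) = ((3:ℕ):ℝ) by norm_num, Real.rpow_natCast]
        norm_num
      simp only [myF, Real.sin_zero, Real.cos_zero]
      norm_num [h4]
    have hpi : myF Real.pi = Real.pi := by
      simp [myF, Real.sin_pi, Real.cos_pi]
      rw [show (4:ℝ) - (-1-1)^2 = 0 by norm_num]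
      rw [Real.zero_rpow (by norm_num)]
    rw [h0, hpi]
  rw [hsplit, hval]
  have hpi := Real.pi_ne_zero
  field_simp
end

section
/- Let (f_{m,n}) ∈ ℓ²(ℤ≥0 × ℤ≥0) satisfy, with ν = E/λ and α = μ/λ: f_{m+1,n}+f_{m-1,n}+f_{m,n+1}+f_{m,n-1} = -ν f_{m,n} for m,n ≥ 1; f_{1,n}+f_{0,n+1}+f_{0,n-1} = -ν f_{0,n} for n ≥ 1; f_{m+1,0}+f_{m-1,0}+f_{m,1} = -ν f_{m,0} for m ≥ 1; and f_{1,0}+f_{0,1} = (α - ν) f_{0,0}. Define, for |x|,|y| < 1, F(x,y) = Σ_{p,q≥1} f_{p,q} x^{p-1} y^{q-1}, F(x) = Σ_{p≥1} f_{p,0} x^{p-1}, G(y) = Σ_{q≥1} f_{0,q} y^{q-1}. Then -Q(x,y)F(x,y) = q(x,y)F(x) + q(y,x)G(y) + q0(x,y) f_{0,0}, where Q(x,y) = y²x + x²y + νxy + x + y, q(x,y) = x² + xy + νx + 1, and q0(x,y) = x + y + ν - α. -/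
open scoped BigOperators

private lemma split1 (g : ℕ → ℕ → ℂ) (hg : Summable (fun p : ℕ × ℕ => g p.1 p.2)) :
    ∑' p : ℕ × ℕ, g p.1 p.2 = (∑' n : ℕ, g 0 n) + ∑' p : ℕ × ℕ, g (p.1 + 1) p.2 := by
  have hinj : Function.Injective (fun p : ℕ × ℕ => ((p.1 + 1, p.2) : ℕ × ℕ)) := by
    intro a b h
    simp only [Prod.mk.injEq] at h
    exact Prod.ext (by omega) h.2
  have hg' : Summable (fun p : ℕ × ℕ => g (p.1 + 1) p.2) := by
    have := hg.comp_injective hinj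
    exact this
  calc ∑' p : ℕ × ℕ, g p.1 p.2 = ∑' m : ℕ, ∑' n : ℕ, g m n := hg.tsum_prod
    _ = (∑' n : ℕ, g 0 n) + ∑' m : ℕ, ∑' n : ℕ, g (m + 1) n := by
        rw [hg.prod.tsum_eq_zero_add]
    _ = (∑' n : ℕ, g 0 n) + ∑' p : ℕ × ℕ, g (p.1 + 1) p.2 := by
        rw [hg'.tsum_prod]

private lemma split2 (g : ℕ → ℕ → ℂ) (hg : Summable (fun p : ℕ × ℕ => g p.1 p.2)) :
    ∑' p : ℕ × ℕ, g p.1 p.2 = (∑' m : ℕ, g m 0) + ∑' p : ℕ × ℕ, g p.1 (p.2 + 1) := by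
  have hswap : Summable (fun p : ℕ × ℕ => g p.2 p.1) := by
    have := hg.prod_symm
    simpa [Prod.swap] using this
  have h1 := split1 (fun a b => g b a) hswap
  have e2 : ∑' p : ℕ × ℕ, g p.2 p.1 = ∑' p : ℕ × ℕ, g p.1 p.2 :=
    (Equiv.prodComm ℕ ℕ).tsum_eq (fun p : ℕ × ℕ => g p.1 p.2)
  have e3 : ∑' p : ℕ × ℕ, g p.2 (p.1 + 1) = ∑' p : ℕ × ℕ, g p.1 (p.2 + 1) :=
    (Equiv.prodComm ℕ ℕ).tsum_eq (fun p : ℕ × ℕ => g p.1 (p.2 + 1))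
  rw [← e2, ← e3]
  exact h1

theorem functional_equation (l μ E : ℝ) (hl : 0 < l) (ν α : ℝ)
    (hν : ν = E / l) (hα : α = μ / l)
    (f : ℕ → ℕ → ℂ)
    (hsum : Summable (fun p : ℕ × ℕ => ‖f p.1 p.2‖^2))
    (hint : ∀ m n : ℕ, f (m+2) (n+1) + f m (n+1) + f (m+1) (n+2) + f (m+1) n
      = -(ν : ℂ) * f (m+1) (n+1))
    (hx0 : ∀ n : ℕ, f 1 (n+1) + f 0 (n+2) + f 0 n = -(ν : ℂ) * f 0 (n+1))
    (hy0 : ∀ m : ℕ, f (m+2) 0 + f m 0 + f (m+1) 1 = -(ν : ℂ) * f (m+1) 0)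
    (h00 : f 1 0 + f 0 1 = ((α : ℂ) - (ν : ℂ)) * f 0 0) :
    ∀ x y : ℂ, ‖x‖ < 1 → ‖y‖ < 1 →
      -(y^2*x + x^2*y + ν*x*y + x + y) *
        (∑' pq : ℕ × ℕ, f (pq.1+1) (pq.2+1) * x^pq.1 * y^pq.2) =
      (x^2 + x*y + ν*x + 1) * (∑' p : ℕ, f (p+1) 0 * x^p) +
      (y^2 + x*y + ν*y + 1) * (∑' q : ℕ, f 0 (q+1) * y^q) +
      (x + y + ν - α) * f 0 0 := by
  intro x y hx hy
  -- boundedness of f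
  set Cb : ℝ := Real.sqrt (∑' p : ℕ × ℕ, ‖f p.1 p.2‖^2) with hCb
  have hCb0 : 0 ≤ Cb := Real.sqrt_nonneg _
  have hfb : ∀ m n : ℕ, ‖f m n‖ ≤ Cb := by
    intro m n
    have h1 : ‖f m n‖^2 ≤ ∑' p : ℕ × ℕ, ‖f p.1 p.2‖^2 :=
      hsum.le_tsum (m, n) (fun _ _ => sq_nonneg _)
    calc ‖f m n‖ = Real.sqrt (‖f m n‖^2) := (Real.sqrt_sq (norm_nonneg _)).symm
      _ ≤ Cb := Real.sqrt_le_sqrt h1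
  -- summability of double series
  have key : ∀ a b c d : ℕ,
      Summable (fun p : ℕ × ℕ => f (p.1+a) (p.2+b) * x^(p.1+c) * y^(p.2+d)) := by
    intro a b c d
    have hgeo : Summable (fun p : ℕ × ℕ => Cb * (‖x‖^p.1 * ‖y‖^p.2)) := by
      exact ((summable_geometric_of_lt_one (norm_nonneg x) hx).mul_of_nonneg
        (summable_geometric_of_lt_one (norm_nonneg y) hy)
        (fun n => pow_nonneg (norm_nonneg x) n)
        (fun n => pow_nonneg (norm_nonneg y) n)).mul_left Cb
    apply Summable.of_norm_bounded hgeo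
    intro p
    rw [norm_mul, norm_mul, norm_pow, norm_pow]
    have hxp : ‖x‖^(p.1+c) ≤ ‖x‖^p.1 :=
      pow_le_pow_of_le_one (norm_nonneg x) hx.le (Nat.le_add_right _ _)
    have hyp : ‖y‖^(p.2+d) ≤ ‖y‖^p.2 :=
      pow_le_pow_of_le_one (norm_nonneg y) hy.le (Nat.le_add_right _ _)
    calc ‖f (p.1+a) (p.2+b)‖ * ‖x‖^(p.1+c) * ‖y‖^(p.2+d)
        ≤ Cb * ‖x‖^p.1 * ‖y‖^p.2 := by
          apply mul_le_mul _ hyp (pow_nonneg (norm_nonneg y) _)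
            (mul_nonneg hCb0 (pow_nonneg (norm_nonneg x) _))
          exact mul_le_mul (hfb _ _) hxp (pow_nonneg (norm_nonneg x) _) hCb0
      _ = Cb * (‖x‖^p.1 * ‖y‖^p.2) := by ring
  -- summability of single series
  have key1y : ∀ a b c : ℕ, Summable (fun n : ℕ => f a (n+b) * y^(n+c)) := by
    intro a b c
    have hgeo : Summable (fun n : ℕ => Cb * ‖y‖^n) :=
      (summable_geometric_of_lt_one (norm_nonneg y) hy).mul_left Cb
    apply Summable.of_norm_bounded hgeo
    intro n
    rw [norm_mul, norm_pow]
    exact mul_le_mul (hfb _ _)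
      (pow_le_pow_of_le_one (norm_nonneg y) hy.le (Nat.le_add_right _ _))
      (pow_nonneg (norm_nonneg y) _) hCb0
  have key1x : ∀ a b c : ℕ, Summable (fun m : ℕ => f (m+b) a * x^(m+c)) := by
    intro a b c
    have hgeo : Summable (fun m : ℕ => Cb * ‖x‖^m) :=
      (summable_geometric_of_lt_one (norm_nonneg x) hx).mul_left Cb
    apply Summable.of_norm_bounded hgeo
    intro m
    rw [norm_mul, norm_pow]
    exact mul_le_mul (hfb _ _)
      (pow_le_pow_of_le_one (norm_nonneg x) hx.le (Nat.le_add_right _ _))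
      (pow_nonneg (norm_nonneg x) _) hCb0
  -- E1
  have E1 : (∑' p : ℕ × ℕ,
        (f (p.1+2) (p.2+1) + f p.1 (p.2+1) + f (p.1+1) (p.2+2) + f (p.1+1) p.2)
          * (x^(p.1+1) * y^(p.2+1)))
      = (-(ν:ℂ)*(x*y)) * ∑' pq : ℕ × ℕ, f (pq.1+1) (pq.2+1) * x^pq.1 * y^pq.2 := by
    calc (∑' p : ℕ × ℕ,
        (f (p.1+2) (p.2+1) + f p.1 (p.2+1) + f (p.1+1) (p.2+2) + f (p.1+1) p.2)
          * (x^(p.1+1) * y^(p.2+1)))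
        = ∑' p : ℕ × ℕ, (-(ν:ℂ)*(x*y)) * (f (p.1+1) (p.2+1) * x^p.1 * y^p.2) :=
          tsum_congr fun p => by rw [hint p.1 p.2]; ring
      _ = _ := tsum_mul_left
  -- summability of the four pieces
  have hT1 := key 2 1 1 1
  have hT2 : Summable (fun p : ℕ × ℕ => f p.1 (p.2+1) * x^(p.1+1) * y^(p.2+1)) := by
    simpa using key 0 1 1 1
  have hT3 := key 1 2 1 1
  have hT4 : Summable (fun p : ℕ × ℕ => f (p.1+1) p.2 * x^(p.1+1) * y^(p.2+1)) := by
    simpa using key 1 0 1 1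
  -- E2
  have E2 : (∑' p : ℕ × ℕ,
        (f (p.1+2) (p.2+1) + f p.1 (p.2+1) + f (p.1+1) (p.2+2) + f (p.1+1) p.2)
          * (x^(p.1+1) * y^(p.2+1)))
      = (∑' p : ℕ × ℕ, f (p.1+2) (p.2+1) * x^(p.1+1) * y^(p.2+1))
        + (∑' p : ℕ × ℕ, f p.1 (p.2+1) * x^(p.1+1) * y^(p.2+1))
        + (∑' p : ℕ × ℕ, f (p.1+1) (p.2+2) * x^(p.1+1) * y^(p.2+1))
        + (∑' p : ℕ × ℕ, f (p.1+1) p.2 * x^(p.1+1) * y^(p.2+1)) := by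
    rw [← Summable.tsum_add hT1 hT2, ← Summable.tsum_add (hT1.add hT2) hT3,
      ← Summable.tsum_add ((hT1.add hT2).add hT3) hT4]
    exact tsum_congr fun p => by ring
  -- E3
  have E3 : y * (∑' pq : ℕ × ℕ, f (pq.1+1) (pq.2+1) * x^pq.1 * y^pq.2)
      = y * (∑' n : ℕ, f 1 (n+1) * y^n)
        + ∑' p : ℕ × ℕ, f (p.1+2) (p.2+1) * x^(p.1+1) * y^(p.2+1) := by
    have hs : Summable (fun p : ℕ × ℕ => f (p.1+1) (p.2+1) * x^p.1 * y^(p.2+1)) := by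
      simpa using key 1 1 0 1
    have h := split1 (fun a b => f (a+1) (b+1) * x^a * y^(b+1)) hs
    calc y * (∑' pq : ℕ × ℕ, f (pq.1+1) (pq.2+1) * x^pq.1 * y^pq.2)
        = ∑' p : ℕ × ℕ, f (p.1+1) (p.2+1) * x^p.1 * y^(p.2+1) := by
          rw [← tsum_mul_left]; exact tsum_congr fun p => by ring
      _ = (∑' n : ℕ, f (0+1) (n+1) * x^0 * y^(n+1))
          + ∑' p : ℕ × ℕ, f (p.1+1+1) (p.2+1) * x^(p.1+1) * y^(p.2+1) := h
      _ = y * (∑' n : ℕ, f 1 (n+1) * y^n)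
          + ∑' p : ℕ × ℕ, f (p.1+2) (p.2+1) * x^(p.1+1) * y^(p.2+1) := by
          congr 1
          · rw [← tsum_mul_left]
            exact tsum_congr fun n => by norm_num; try ring
  -- E4
  have E4 : (∑' p : ℕ × ℕ, f p.1 (p.2+1) * x^(p.1+1) * y^(p.2+1))
      = (x*y) * (∑' q : ℕ, f 0 (q+1) * y^q)
        + (x^2*y) * (∑' pq : ℕ × ℕ, f (pq.1+1) (pq.2+1) * x^pq.1 * y^pq.2) := by
    have h := split1 (fun a b => f a (b+1) * x^(a+1) * y^(b+1)) hT2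
    calc (∑' p : ℕ × ℕ, f p.1 (p.2+1) * x^(p.1+1) * y^(p.2+1))
        = (∑' n : ℕ, f 0 (n+1) * x^(0+1) * y^(n+1))
          + ∑' p : ℕ × ℕ, f (p.1+1) (p.2+1) * x^(p.1+1+1) * y^(p.2+1) := h
      _ = (x*y) * (∑' q : ℕ, f 0 (q+1) * y^q)
          + (x^2*y) * (∑' pq : ℕ × ℕ, f (pq.1+1) (pq.2+1) * x^pq.1 * y^pq.2) := by
          congr 1
          · rw [← tsum_mul_left]
            exact tsum_congr fun n => by ring
          · rw [← tsum_mul_left]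
            exact tsum_congr fun p => by ring
  -- E5
  have E5 : x * (∑' pq : ℕ × ℕ, f (pq.1+1) (pq.2+1) * x^pq.1 * y^pq.2)
      = x * (∑' m : ℕ, f (m+1) 1 * x^m)
        + ∑' p : ℕ × ℕ, f (p.1+1) (p.2+2) * x^(p.1+1) * y^(p.2+1) := by
    have hs : Summable (fun p : ℕ × ℕ => f (p.1+1) (p.2+1) * x^(p.1+1) * y^p.2) := by
      simpa using key 1 1 1 0
    have h := split2 (fun a b => f (a+1) (b+1) * x^(a+1) * y^b) hs
    calc x * (∑' pq : ℕ × ℕ, f (pq.1+1) (pq.2+1) * x^pq.1 * y^pq.2)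
        = ∑' p : ℕ × ℕ, f (p.1+1) (p.2+1) * x^(p.1+1) * y^p.2 := by
          rw [← tsum_mul_left]; exact tsum_congr fun p => by ring
      _ = (∑' m : ℕ, f (m+1) (0+1) * x^(m+1) * y^0)
          + ∑' p : ℕ × ℕ, f (p.1+1) (p.2+1+1) * x^(p.1+1) * y^(p.2+1) := h
      _ = x * (∑' m : ℕ, f (m+1) 1 * x^m)
          + ∑' p : ℕ × ℕ, f (p.1+1) (p.2+2) * x^(p.1+1) * y^(p.2+1) := by
          congr 1
          · rw [← tsum_mul_left]
            exact tsum_congr fun m => by norm_num; try ring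
  -- E6
  have E6 : (∑' p : ℕ × ℕ, f (p.1+1) p.2 * x^(p.1+1) * y^(p.2+1))
      = (x*y) * (∑' p : ℕ, f (p+1) 0 * x^p)
        + (x*y^2) * (∑' pq : ℕ × ℕ, f (pq.1+1) (pq.2+1) * x^pq.1 * y^pq.2) := by
    have h := split2 (fun a b => f (a+1) b * x^(a+1) * y^(b+1)) hT4
    calc (∑' p : ℕ × ℕ, f (p.1+1) p.2 * x^(p.1+1) * y^(p.2+1))
        = (∑' m : ℕ, f (m+1) 0 * x^(m+1) * y^(0+1))
          + ∑' p : ℕ × ℕ, f (p.1+1) (p.2+1) * x^(p.1+1) * y^(p.2+1+1) := h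
      _ = (x*y) * (∑' p : ℕ, f (p+1) 0 * x^p)
          + (x*y^2) * (∑' pq : ℕ × ℕ, f (pq.1+1) (pq.2+1) * x^pq.1 * y^pq.2) := by
          congr 1
          · rw [← tsum_mul_left]
            exact tsum_congr fun m => by ring
          · rw [← tsum_mul_left]
            exact tsum_congr fun p => by ring
  -- E7
  have E7 : (∑' n : ℕ, (f 1 (n+1) + f 0 (n+2) + f 0 n) * y^(n+1))
      = (-(ν:ℂ)*y) * (∑' q : ℕ, f 0 (q+1) * y^q) := by
    calc (∑' n : ℕ, (f 1 (n+1) + f 0 (n+2) + f 0 n) * y^(n+1))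
        = ∑' n : ℕ, (-(ν:ℂ)*y) * (f 0 (n+1) * y^n) :=
          tsum_congr fun n => by rw [hx0 n]; ring
      _ = _ := tsum_mul_left
  -- E8
  have w1 : Summable (fun n : ℕ => f 1 (n+1) * y^(n+1)) := key1y 1 1 1
  have w2 : Summable (fun n : ℕ => f 0 (n+2) * y^(n+1)) := key1y 0 2 1
  have w3 : Summable (fun n : ℕ => f 0 n * y^(n+1)) := by simpa using key1y 0 0 1
  have E8 : (∑' n : ℕ, (f 1 (n+1) + f 0 (n+2) + f 0 n) * y^(n+1))
      = y * (∑' n : ℕ, f 1 (n+1) * y^n)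
        + (∑' n : ℕ, f 0 (n+2) * y^(n+1))
        + (y * f 0 0 + y^2 * (∑' q : ℕ, f 0 (q+1) * y^q)) := by
    have hsplit : (∑' n : ℕ, (f 1 (n+1) + f 0 (n+2) + f 0 n) * y^(n+1))
        = (∑' n : ℕ, f 1 (n+1) * y^(n+1)) + (∑' n : ℕ, f 0 (n+2) * y^(n+1))
          + (∑' n : ℕ, f 0 n * y^(n+1)) := by
      rw [← Summable.tsum_add w1 w2, ← Summable.tsum_add (w1.add w2) w3]
      exact tsum_congr fun n => by ring
    rw [hsplit]
    congr 1
    · congr 1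
      rw [← tsum_mul_left]
      exact tsum_congr fun n => by ring
    · -- ∑' n, f 0 n * y^(n+1) = y * f 0 0 + y^2 * GY
      have hz : Summable (fun n : ℕ => f 0 n * y^n) := by simpa using key1y 0 0 0
      calc (∑' n : ℕ, f 0 n * y^(n+1))
          = ∑' n : ℕ, y * (f 0 n * y^n) := tsum_congr fun n => by ring
        _ = y * ∑' n : ℕ, f 0 n * y^n := tsum_mul_left
        _ = y * (f 0 0 * y^0 + ∑' n : ℕ, f 0 (n+1) * y^(n+1)) := by
            rw [Summable.tsum_eq_zero_add hz]
        _ = y * (f 0 0 * y^0 + ∑' n : ℕ, y * (f 0 (n+1) * y^n)) := by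
            rw [tsum_congr (fun n : ℕ => by ring :
              ∀ n : ℕ, f 0 (n+1) * y^(n+1) = y * (f 0 (n+1) * y^n))]
        _ = y * (f 0 0 * y^0 + y * ∑' q : ℕ, f 0 (q+1) * y^q) := by
            rw [tsum_mul_left]
        _ = y * f 0 0 + y^2 * (∑' q : ℕ, f 0 (q+1) * y^q) := by ring
  -- E10
  have E10 : (∑' q : ℕ, f 0 (q+1) * y^q)
      = f 0 1 + ∑' n : ℕ, f 0 (n+2) * y^(n+1) := by
    have hz : Summable (fun q : ℕ => f 0 (q+1) * y^q) := key1y 0 1 0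
    calc (∑' q : ℕ, f 0 (q+1) * y^q)
        = f 0 (0+1) * y^0 + ∑' q : ℕ, f 0 (q+1+1) * y^(q+1) := Summable.tsum_eq_zero_add hz
      _ = f 0 1 + ∑' n : ℕ, f 0 (n+2) * y^(n+1) := by
          norm_num
  -- E12
  have E12 : (∑' m : ℕ, (f (m+2) 0 + f m 0 + f (m+1) 1) * x^(m+1))
      = (-(ν:ℂ)*x) * (∑' p : ℕ, f (p+1) 0 * x^p) := by
    calc (∑' m : ℕ, (f (m+2) 0 + f m 0 + f (m+1) 1) * x^(m+1))
        = ∑' m : ℕ, (-(ν:ℂ)*x) * (f (m+1) 0 * x^m) :=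
          tsum_congr fun m => by rw [hy0 m]; ring
      _ = _ := tsum_mul_left
  -- E13
  have v1 : Summable (fun m : ℕ => f (m+2) 0 * x^(m+1)) := key1x 0 2 1
  have v2 : Summable (fun m : ℕ => f m 0 * x^(m+1)) := by simpa using key1x 0 0 1
  have v3 : Summable (fun m : ℕ => f (m+1) 1 * x^(m+1)) := key1x 1 1 1
  have E13 : (∑' m : ℕ, (f (m+2) 0 + f m 0 + f (m+1) 1) * x^(m+1))
      = (∑' m : ℕ, f (m+2) 0 * x^(m+1))
        + (x * f 0 0 + x^2 * (∑' p : ℕ, f (p+1) 0 * x^p))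
        + x * (∑' m : ℕ, f (m+1) 1 * x^m) := by
    have hsplit : (∑' m : ℕ, (f (m+2) 0 + f m 0 + f (m+1) 1) * x^(m+1))
        = (∑' m : ℕ, f (m+2) 0 * x^(m+1)) + (∑' m : ℕ, f m 0 * x^(m+1))
          + (∑' m : ℕ, f (m+1) 1 * x^(m+1)) := by
      rw [← Summable.tsum_add v1 v2, ← Summable.tsum_add (v1.add v2) v3]
      exact tsum_congr fun m => by ring
    rw [hsplit]
    congr 1
    · congr 1
      have hz : Summable (fun m : ℕ => f m 0 * x^m) := by simpa using key1x 0 0 0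
      calc (∑' m : ℕ, f m 0 * x^(m+1))
          = ∑' m : ℕ, x * (f m 0 * x^m) := tsum_congr fun m => by ring
        _ = x * ∑' m : ℕ, f m 0 * x^m := tsum_mul_left
        _ = x * (f 0 0 * x^0 + ∑' m : ℕ, f (m+1) 0 * x^(m+1)) := by
            rw [Summable.tsum_eq_zero_add hz]
        _ = x * (f 0 0 * x^0 + ∑' m : ℕ, x * (f (m+1) 0 * x^m)) := by
            rw [tsum_congr (fun m : ℕ => by ring :
              ∀ m : ℕ, f (m+1) 0 * x^(m+1) = x * (f (m+1) 0 * x^m))]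
        _ = x * (f 0 0 * x^0 + x * ∑' p : ℕ, f (p+1) 0 * x^p) := by
            rw [tsum_mul_left]
        _ = x * f 0 0 + x^2 * (∑' p : ℕ, f (p+1) 0 * x^p) := by ring
    · rw [← tsum_mul_left]
      exact tsum_congr fun m => by ring
  -- E14
  have E14 : (∑' p : ℕ, f (p+1) 0 * x^p)
      = f 1 0 + ∑' m : ℕ, f (m+2) 0 * x^(m+1) := by
    have hz : Summable (fun p : ℕ => f (p+1) 0 * x^p) := key1x 0 1 0
    calc (∑' p : ℕ, f (p+1) 0 * x^p)
        = f (0+1) 0 * x^0 + ∑' p : ℕ, f (p+1+1) 0 * x^(p+1) := Summable.tsum_eq_zero_add hz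
      _ = f 1 0 + ∑' m : ℕ, f (m+2) 0 * x^(m+1) := by
          norm_num
  linear_combination (-E1 + E2 - E3 + E4 - E5 + E6) + (-E7 + E8 - E10) + (-E12 + E13 - E14) - h00
end

section
/- Let F₁(x) = Σ_{k≥1} a_k x^k be a power series with square-summable coefficients, α ∈ ℂ, and suppose the function F(x,y) = (F₁(x) − F₁(−y) + αy(x+y)) / ((x+y)(xy+1)) is analytic on {|x| < 1, |y| < 1} with square-summable Taylor coefficients A_{m,n}. Then A_{m,n} = (−1)^n (α δ_{m,n−1} + Σ_k a_k), where the sum is over k with |m−n|+1 ≤ k ≤ m+n+1 and m+n−k odd; in particular A_{n+l,n} = (−1)^n Σ_{r=0}^{n} a_{l+1+2r} for l ≥ 1. -/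
set_option maxHeartbeats 1000000

open Finset Filter


lemma sq_bound {ι : Type*} (c : ι → ℂ) (h : Summable (fun k => ‖c k‖^2)) :
    ∀ k, ‖c k‖ ≤ Real.sqrt (∑' k, ‖c k‖^2) := by
  intro k
  have h1 : ‖c k‖^2 ≤ ∑' k, ‖c k‖^2 := Summable.le_tsum h k (fun i _ => sq_nonneg _)
  have := Real.sqrt_le_sqrt h1
  rwa [Real.sqrt_sq (norm_nonneg _)] at this

lemma summable_pow (c : ℕ → ℂ) (M : ℝ) (hM : ∀ n, ‖c n‖ ≤ M) {x : ℂ} (hx : ‖x‖ < 1) :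
    Summable (fun n => c n * x^n) := by
  apply Summable.of_norm_bounded (g := fun n => M * ‖x‖^n)
    (((summable_geometric_of_lt_one (norm_nonneg x) hx)).mul_left M)
  intro n
  rw [norm_mul, norm_pow]
  exact mul_le_mul_of_nonneg_right (hM n) (by positivity)

lemma summable_pow_norm (c : ℕ → ℂ) (M : ℝ) (hM : ∀ n, ‖c n‖ ≤ M) {x : ℂ} (hx : ‖x‖ < 1) :
    Summable (fun n => ‖c n * x^n‖) := by
  apply Summable.of_nonneg_of_le (fun n => norm_nonneg _) (fun n => ?_)
    (((summable_geometric_of_lt_one (norm_nonneg x) hx)).mul_left M)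
  rw [norm_mul, norm_pow]
  exact mul_le_mul_of_nonneg_right (hM n) (by positivity)

lemma summable2 (c : ℕ → ℕ → ℂ) (M : ℝ) (hM : ∀ m n, ‖c m n‖ ≤ M) {x y : ℂ}
    (hx : ‖x‖ < 1) (hy : ‖y‖ < 1) :
    Summable (fun p : ℕ × ℕ => c p.1 p.2 * x^p.1 * y^p.2) := by
  have hg : Summable (fun p : ℕ × ℕ => ‖x‖^p.1 * ‖y‖^p.2) :=
    Summable.mul_of_nonneg (summable_geometric_of_lt_one (norm_nonneg x) hx)
      (summable_geometric_of_lt_one (norm_nonneg y) hy)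
      (fun n => by positivity) (fun n => by positivity)
  apply Summable.of_norm_bounded (g := fun p : ℕ × ℕ => M * (‖x‖^p.1 * ‖y‖^p.2)) (hg.mul_left M)
  intro p
  rw [norm_mul, norm_mul, norm_pow, norm_pow, mul_assoc]
  exact mul_le_mul_of_nonneg_right (hM p.1 p.2) (by positivity)

lemma vanish1 (c : ℕ → ℂ) (M : ℝ) (hM : ∀ n, ‖c n‖ ≤ M) (e : ℂ)
    (h : ∀ x : ℂ, ‖x‖ < 1 → x ≠ e → ∑' n, c n * x^n = 0) : ∀ n, c n = 0 := by
  have hM0 : 0 ≤ M := le_trans (norm_nonneg _) (hM 0)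
  intro N
  induction N using Nat.strong_induction_on with
  | _ N ih =>
  -- key estimate
  have est : ∀ x : ℂ, ‖x‖ ≤ 1/2 → x ≠ e → x ≠ 0 → ‖c N‖ ≤ 2 * M * ‖x‖ := by
    intro x hx2 hxe hx0
    have hx1 : ‖x‖ < 1 := lt_of_le_of_lt hx2 (by norm_num)
    have hsum : Summable (fun n => c n * x^n) := summable_pow c M hM hx1
    have h0 := h x hx1 hxe
    have hsplit := Summable.sum_add_tsum_nat_add (f := fun n => c n * x^n) N hsum
    have hz : ∑ i ∈ range N, c i * x^i = 0 := by
      apply Finset.sum_eq_zero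
      intro i hi
      rw [ih i (Finset.mem_range.mp hi), zero_mul]
    rw [hz, zero_add, h0] at hsplit
    -- hsplit : ∑' i, c (i+N) * x^(i+N) = 0
    have hfac : ∀ i : ℕ, c (i+N) * x^(i+N) = (c (i+N) * x^i) * x^N := by
      intro i; rw [pow_add]; ring
    rw [tsum_congr hfac, tsum_mul_right] at hsplit
    have hxN : x^N ≠ 0 := pow_ne_zero _ hx0
    have htail : ∑' i, c (i+N) * x^i = 0 := by
      rcases mul_eq_zero.mp hsplit with h' | h'
      · exact h'
      · exact absurd h' hxN
    have hsum2 : Summable (fun i => c (i+N) * x^i) := summable_pow _ M (fun i => hM _) hx1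
    rw [Summable.tsum_eq_zero_add hsum2] at htail
    simp only [pow_zero, mul_one, zero_add] at htail
    have hCN : c N = - ∑' i, c (i+1+N) * x^(i+1) := by linear_combination htail
    rw [hCN, norm_neg]
    have hbnd : ∀ i : ℕ, ‖c (i+1+N) * x^(i+1)‖ ≤ (M * ‖x‖) * (1/2)^i := by
      intro i
      rw [norm_mul, norm_pow, pow_succ]
      calc ‖c (i+1+N)‖ * (‖x‖^i * ‖x‖) ≤ M * (‖x‖^i * ‖x‖) :=
            mul_le_mul_of_nonneg_right (hM _) (by positivity)
        _ = (M * ‖x‖) * ‖x‖^i := by ring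
        _ ≤ (M * ‖x‖) * (1/2)^i := by
            apply mul_le_mul_of_nonneg_left (pow_le_pow_left₀ (norm_nonneg _) hx2 i) (by positivity)
    have hgeo : Summable (fun i : ℕ => (M * ‖x‖) * (1/2)^i) := summable_geometric_two.mul_left _
    have hsumn : Summable (fun i => ‖c (i+1+N) * x^(i+1)‖) :=
      Summable.of_nonneg_of_le (fun i => norm_nonneg _) hbnd hgeo
    calc ‖∑' i, c (i+1+N) * x^(i+1)‖ ≤ ∑' i, ‖c (i+1+N) * x^(i+1)‖ :=
          norm_tsum_le_tsum_norm hsumn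
      _ ≤ ∑' i : ℕ, (M * ‖x‖) * (1/2)^i := Summable.tsum_le_tsum hbnd hsumn hgeo
      _ = (M * ‖x‖) * 2 := by rw [tsum_mul_left, tsum_geometric_two]
      _ = 2 * M * ‖x‖ := by ring
  -- conclude
  by_contra hc
  have hpos : 0 < ‖c N‖ := norm_pos_iff.mpr hc
  set t : ℝ := min (‖c N‖ / (4 * M + 1)) (1/4) with ht
  have ht0 : 0 < t := lt_min (by positivity) (by norm_num)
  have ht2 : t ≤ 1/4 := min_le_right _ _
  -- choose x among t, t/2 avoiding e
  have hpick : ∃ x : ℂ, ‖x‖ ≤ 1/2 ∧ x ≠ e ∧ x ≠ 0 ∧ ‖x‖ ≤ t := by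
    by_cases he : (t : ℂ) = e
    · refine ⟨(t/2 : ℝ), ?_, ?_, ?_, ?_⟩
      · rw [Complex.norm_real, Real.norm_eq_abs, abs_of_pos (by linarith)]; linarith
      · intro hcon; rw [← he] at hcon
        have := congrArg Complex.re hcon
        simp at this; linarith
      · intro hcon
        have := congrArg Complex.re hcon
        simp at this; linarith
      · rw [Complex.norm_real, Real.norm_eq_abs, abs_of_pos (by linarith)]; linarith
    · refine ⟨(t : ℝ), ?_, he, ?_, ?_⟩
      · rw [Complex.norm_real, Real.norm_eq_abs, abs_of_pos ht0]; linarith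
      · intro hcon
        have := congrArg Complex.re hcon
        simp at this; linarith
      · rw [Complex.norm_real, Real.norm_eq_abs, abs_of_pos ht0]
  obtain ⟨x, hx2, hxe, hx0, hxt⟩ := hpick
  have hest := est x hx2 hxe hx0
  have : ‖c N‖ ≤ 2 * M * t := le_trans hest (by nlinarith [norm_nonneg x])
  have htle : t ≤ ‖c N‖ / (4 * M + 1) := min_le_left _ _
  have h1 : t * (4 * M + 1) ≤ ‖c N‖ := (le_div_iff₀ (by positivity)).mp htle
  nlinarith [ht0, hM0]

lemma vanish2 (c : ℕ → ℕ → ℂ) (M : ℝ) (hM : ∀ m n, ‖c m n‖ ≤ M)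
    (h : ∀ x y : ℂ, ‖x‖ < 1 → ‖y‖ < 1 → x ≠ -y →
      ∑' p : ℕ × ℕ, c p.1 p.2 * x^p.1 * y^p.2 = 0) : ∀ m n, c m n = 0 := by
  -- first: for every y in ball, and every m, the inner sum vanishes
  have inner : ∀ y : ℂ, ‖y‖ < 1 → ∀ m, (∑' n, c m n * y^n) = 0 := by
    intro y hy
    have hd : ∀ m, ‖∑' n, c m n * y^n‖ ≤ M * (1 - ‖y‖)⁻¹ := by
      intro m
      have hb : ∀ n : ℕ, ‖c m n * y^n‖ ≤ M * ‖y‖^n := by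
        intro n; rw [norm_mul, norm_pow]
        exact mul_le_mul_of_nonneg_right (hM m n) (by positivity)
      have hgeo : Summable (fun n : ℕ => M * ‖y‖^n) :=
        ((summable_geometric_of_lt_one (norm_nonneg y) hy)).mul_left M
      have hsn : Summable (fun n => ‖c m n * y^n‖) :=
        Summable.of_nonneg_of_le (fun n => norm_nonneg _) hb hgeo
      calc ‖∑' n, c m n * y^n‖ ≤ ∑' n, ‖c m n * y^n‖ := norm_tsum_le_tsum_norm hsn
        _ ≤ ∑' n : ℕ, M * ‖y‖^n := Summable.tsum_le_tsum hb hsn hgeo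
        _ = M * (1 - ‖y‖)⁻¹ := by
            rw [tsum_mul_left, tsum_geometric_of_lt_one (norm_nonneg y) hy]
    apply vanish1 (fun m => ∑' n, c m n * y^n) (M * (1 - ‖y‖)⁻¹) hd (-y)
    intro x hx hxe
    have h2 := h x y hx hy hxe
    have hs2 : Summable (fun p : ℕ × ℕ => c p.1 p.2 * x^p.1 * y^p.2) :=
      summable2 c M hM hx hy
    have hrow : ∀ m : ℕ, Summable (fun n => c m n * x^m * y^n) := by
      intro m
      have := (summable_pow (fun n => c m n) M (fun n => hM m n) hy).mul_left (x^m)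
      exact this.congr (fun n => by ring)
    rw [Summable.tsum_prod' hs2 hrow] at h2
    rw [← h2]
    apply tsum_congr
    intro m
    rw [← tsum_mul_right]
    apply tsum_congr
    intro n
    ring
  intro m n
  have := vanish1 (fun n => c m n) M (fun n => hM m n) 2 (fun y hy hy2 => inner y hy m)
  · exact this n


lemma tsum_shift2 (c : ℕ → ℕ → ℂ) (x y : ℂ) (i j : ℕ) :
    ∑' p : ℕ × ℕ, (if i ≤ p.1 ∧ j ≤ p.2 then c (p.1-i) (p.2-j) else 0) * x^p.1 * y^p.2
      = x^i * y^j * ∑' p : ℕ × ℕ, c p.1 p.2 * x^p.1 * y^p.2 := by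
  set f : ℕ × ℕ → ℂ := fun p => (if i ≤ p.1 ∧ j ≤ p.2 then c (p.1-i) (p.2-j) else 0) * x^p.1 * y^p.2 with hf
  set g : ℕ × ℕ → ℕ × ℕ := fun q => (q.1+i, q.2+j) with hg
  have hginj : Function.Injective g := by
    intro q q' hqq
    simp only [hg, Prod.mk.injEq, Prod.ext_iff] at hqq ⊢
    omega
  have hsupp : Function.support f ⊆ Set.range g := by
    intro p hp
    simp only [Function.mem_support, hf] at hp
    by_cases hc : i ≤ p.1 ∧ j ≤ p.2
    · exact ⟨(p.1 - i, p.2 - j), by simp only [hg, Prod.ext_iff]; constructor <;> omega⟩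
    · simp [hc] at hp
  rw [← hginj.tsum_eq hsupp, ← tsum_mul_left]
  apply tsum_congr
  intro q
  simp only [hf, hg]
  rw [if_pos ⟨Nat.le_add_left _ _, Nat.le_add_left _ _⟩]
  simp only [Nat.add_sub_cancel]
  rw [pow_add, pow_add]
  ring

lemma tsum_axis1 (b : ℕ → ℂ) (x y : ℂ) :
    ∑' p : ℕ × ℕ, (if p.2 = 0 then b p.1 else 0) * x^p.1 * y^p.2 = ∑' k, b k * x^k := by
  set f : ℕ × ℕ → ℂ := fun p => (if p.2 = 0 then b p.1 else 0) * x^p.1 * y^p.2 with hf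
  set g : ℕ → ℕ × ℕ := fun k => (k, 0) with hg
  have hginj : Function.Injective g := by
    intro q q' h; simpa [hg, Prod.ext_iff] using h
  have hsupp : Function.support f ⊆ Set.range g := by
    intro p hp
    simp only [Function.mem_support, hf] at hp
    by_cases hc : p.2 = 0
    · exact ⟨p.1, by simp [hg, Prod.ext_iff, hc.symm]⟩
    · simp [hc] at hp
  rw [← hginj.tsum_eq hsupp]
  apply tsum_congr
  intro k
  simp [hf, hg]

lemma tsum_axis2 (b : ℕ → ℂ) (x y : ℂ) :
    ∑' p : ℕ × ℕ, (if p.1 = 0 then b p.2 else 0) * x^p.1 * y^p.2 = ∑' k, b k * y^k := by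
  set f : ℕ × ℕ → ℂ := fun p => (if p.1 = 0 then b p.2 else 0) * x^p.1 * y^p.2 with hf
  set g : ℕ → ℕ × ℕ := fun k => (0, k) with hg
  have hginj : Function.Injective g := by
    intro q q' h; simpa [hg, Prod.ext_iff] using h
  have hsupp : Function.support f ⊆ Set.range g := by
    intro p hp
    simp only [Function.mem_support, hf] at hp
    by_cases hc : p.1 = 0
    · exact ⟨p.2, by simp [hg, Prod.ext_iff, hc.symm]⟩
    · simp [hc] at hp
  rw [← hginj.tsum_eq hsupp]
  apply tsum_congr
  intro k
  simp [hf, hg]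

lemma tsum_point (i0 j0 : ℕ) (v : ℂ) (x y : ℂ) :
    ∑' p : ℕ × ℕ, (if p.1 = i0 ∧ p.2 = j0 then v else 0) * x^p.1 * y^p.2
      = v * x^i0 * y^j0 := by
  have : ∀ p : ℕ × ℕ, (if p.1 = i0 ∧ p.2 = j0 then v else 0) * x^p.1 * y^p.2
      = (if p = (i0, j0) then v * x^i0 * y^j0 else 0) := by
    intro p
    by_cases hc : p = (i0, j0)
    · rw [if_pos hc, if_pos]
      · rw [hc]
      · rw [hc]; exact ⟨rfl, rfl⟩
    · rw [if_neg hc, if_neg, zero_mul, zero_mul]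
      rw [Prod.ext_iff] at hc
      tauto
  rw [tsum_congr this, tsum_ite_eq]


noncomputable def Sd (a : ℕ → ℂ) (m n : ℕ) : ℂ :=
  ∑ r ∈ Finset.range (min m n + 1), a (max m n - min m n + 1 + 2*r)

noncomputable def Cd (a : ℕ → ℂ) (α : ℂ) (m n : ℕ) : ℂ :=
  (-1:ℂ)^n * Sd a m n + (if n = m+1 then (-1:ℂ)^m * α else 0)

noncomputable def EEd (a : ℕ → ℂ) (α : ℂ) (m n : ℕ) : ℂ :=
  (if n = 0 then a m else 0) + (if m = 0 then (-1:ℂ)^(n+1) * a n else 0) +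
  (if m = 1 ∧ n = 1 then α else 0) + (if m = 0 ∧ n = 2 then α else 0)

lemma Sdge (a : ℕ → ℂ) {m n : ℕ} (h : n ≤ m) :
    Sd a m n = ∑ r ∈ range (n+1), a (m - n + 1 + 2*r) := by
  unfold Sd; rw [min_eq_right h, max_eq_left h]

lemma Sdsymm (a : ℕ → ℂ) (m n : ℕ) : Sd a m n = Sd a n m := by
  unfold Sd; rw [min_comm, max_comm]

lemma Skey (a : ℕ → ℂ) (M n : ℕ) (hn : 1 ≤ n) :
    Sd a M n + Sd a (M+2) n = Sd a (M+1) (n-1) + Sd a (M+1) (n+1) := by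
  by_cases h1 : n ≤ M
  · -- case a
    rw [Sdge a h1, Sdge a (by omega : n ≤ M + 2), Sdge a (by omega : n - 1 ≤ M + 1),
        Sdge a (by omega : n + 1 ≤ M + 1)]
    have e1 : ∀ r, a (M + 2 - n + 1 + 2*r) = a (M - n + 3 + 2*r) := by
      intro r; congr 1; omega
    have e2 : ∀ r, a (M + 1 - (n-1) + 1 + 2*r) = a (M - n + 3 + 2*r) := by
      intro r; congr 1; omega
    have e3 : ∀ r, a (M + 1 - (n+1) + 1 + 2*r) = a (M - n + 1 + 2*r) := by
      intro r; congr 1; omega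
    rw [Finset.sum_congr rfl (fun r _ => e1 r), Finset.sum_congr rfl (fun r _ => e2 r),
        Finset.sum_congr rfl (fun r _ => e3 r)]
    have hr1 : n - 1 + 1 = n := by omega
    rw [hr1]
    rw [show n + 1 + 1 = (n+1) + 1 from rfl, sum_range_succ _ (n+1),
        sum_range_succ (fun r => a (M - n + 3 + 2*r)) n]
    have : a (M - n + 3 + 2*n) = a (M - n + 1 + 2*(n+1)) := by congr 1; omega
    rw [this]; ring
  · by_cases h2 : n = M+1
    · subst h2
      rw [Sdsymm a M (M+1), Sdge a (by omega : M ≤ M+1),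
          Sdge a (by omega : M + 1 ≤ M + 2), Sdge a (by omega : M+1-1 ≤ M+1),
          Sdsymm a (M+1) (M+1+1), Sdge a (by omega : M+1 ≤ M+1+1)]
      have e1 : ∀ r, a (M + 1 - M + 1 + 2*r) = a (2 + 2*r) := by
        intro r; congr 1; omega
      have e2 : ∀ r, a (M + 2 - (M+1) + 1 + 2*r) = a (2 + 2*r) := by
        intro r; congr 1; omega
      have e3 : ∀ r, a (M + 1 - (M+1-1) + 1 + 2*r) = a (2 + 2*r) := by
        intro r; congr 1; omega
      have e4 : ∀ r, a (M + 1 + 1 - (M+1) + 1 + 2*r) = a (2 + 2*r) := by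
        intro r; congr 1; omega
      rw [Finset.sum_congr rfl (fun r _ => e1 r), Finset.sum_congr rfl (fun r _ => e2 r),
          Finset.sum_congr rfl (fun r _ => e3 r)]
      clear e4
      have hr1 : M + 1 - 1 + 1 = M + 1 := by omega
      rw [hr1]
    · by_cases h3 : n = M+2
      · subst h3
        rw [Sdsymm a M (M+2), Sdge a (by omega : M ≤ M+2),
            Sdge a (le_refl (M+2)), Sdge a (by omega : M+2-1 ≤ M+1),
            Sdsymm a (M+1) (M+2+1), Sdge a (by omega : M+1 ≤ M+2+1)]
        have e1 : ∀ r, a (M + 2 - M + 1 + 2*r) = a (3 + 2*r) := by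
          intro r; congr 1; omega
        have e2 : ∀ r, a (M + 2 - (M+2) + 1 + 2*r) = a (1 + 2*r) := by
          intro r; congr 1; omega
        have e3 : ∀ r, a (M + 1 - (M+2-1) + 1 + 2*r) = a (1 + 2*r) := by
          intro r; congr 1; omega
        have e4 : ∀ r, a (M + 2 + 1 - (M+1) + 1 + 2*r) = a (3 + 2*r) := by
          intro r; congr 1; omega
        rw [Finset.sum_congr rfl (fun r _ => e1 r), Finset.sum_congr rfl (fun r _ => e2 r),
            Finset.sum_congr rfl (fun r _ => e3 r), Finset.sum_congr rfl (fun r _ => e4 r)]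
        have hr1 : M + 2 - 1 + 1 = M + 2 := by omega
        rw [hr1]
        rw [show M + 2 + 1 = (M+2) + 1 from rfl, sum_range_succ (fun r => a (1 + 2*r)) (M+2),
            sum_range_succ (fun r => a (3 + 2*r)) (M+1)]
        have : a (1 + 2*(M+2)) = a (3 + 2*(M+1)) := by congr 1; omega
        rw [this]; ring
      · have h4 : M + 3 ≤ n := by omega
        rw [Sdsymm a M n, Sdge a (by omega : M ≤ n),
            Sdsymm a (M+2) n, Sdge a (by omega : M+2 ≤ n),
            Sdsymm a (M+1) (n-1), Sdge a (by omega : M+1 ≤ n-1),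
            Sdsymm a (M+1) (n+1), Sdge a (by omega : M+1 ≤ n+1)]
        have e1 : ∀ r, a (n - M + 1 + 2*r) = a (n - M + 1 + 2*r) := fun r => rfl
        have e2 : ∀ r, a (n - (M+2) + 1 + 2*r) = a (n - M - 1 + 2*r) := by
          intro r; congr 1; omega
        have e3 : ∀ r, a (n - 1 - (M+1) + 1 + 2*r) = a (n - M - 1 + 2*r) := by
          intro r; congr 1; omega
        have e4 : ∀ r, a (n + 1 - (M+1) + 1 + 2*r) = a (n - M + 1 + 2*r) := by
          intro r; congr 1; omega
        rw [Finset.sum_congr rfl (fun r _ => e2 r), Finset.sum_congr rfl (fun r _ => e3 r),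
            Finset.sum_congr rfl (fun r _ => e4 r)]
        rw [show M + 2 + 1 = (M+2) + 1 from rfl, sum_range_succ (fun r => a (n - M - 1 + 2*r)) (M+2),
            sum_range_succ (fun r => a (n - M + 1 + 2*r)) (M+1)]
        have : a (n - M - 1 + 2*(M+2)) = a (n - M + 1 + 2*(M+1)) := by congr 1; omega
        rw [this]; ring

lemma Sd_zero (a : ℕ → ℂ) (n : ℕ) : Sd a n 0 = a (n+1) := by
  unfold Sd
  rw [min_eq_right (Nat.zero_le n), max_eq_left (Nat.zero_le n)]
  simp

lemma Sd_zero' (a : ℕ → ℂ) (n : ℕ) : Sd a 0 n = a (n+1) := by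
  rw [Sdsymm, Sd_zero]

lemma Sd_one (a : ℕ → ℂ) {n : ℕ} (h : 1 ≤ n) : Sd a 1 n = a n + a (n+2) := by
  rw [Sdsymm, Sdge a h]
  have e : ∀ r, n - 1 + 1 + 2*r = n + 2*r := fun r => by omega
  simp only [e]
  rw [show (1:ℕ) + 1 = 2 from rfl, Finset.sum_range_succ, Finset.sum_range_one]
  norm_num

lemma Cid (a : ℕ → ℂ) (α : ℂ) (m n : ℕ) :
    (if 2 ≤ m then Cd a α (m-2) n else 0) +
    (if 1 ≤ m ∧ 1 ≤ n then Cd a α (m-1) (n-1) else 0) +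
    (if 1 ≤ m then Cd a α (m-1) (n+1) else 0) + Cd a α m n = EEd a α m (n+1) := by
  match m with
  | 0 =>
    simp only [Cd, EEd, Sd_zero']
    split_ifs <;> first | omega | contradiction | ring1 | (simp_all only [true_and, false_and, and_true, and_false, not_true, not_false_iff]; all_goals first | omega | ring1)
  | 1 =>
    match n with
    | 0 =>
      simp only [Cd, EEd]
      rw [show (1:ℕ) - 1 = 0 from rfl]
      simp only [Sd_zero, Sd_zero']
      norm_num
    | (N+1) =>
      simp only [Cd, EEd]
      rw [show (1:ℕ) - 1 = 0 from rfl, Nat.add_sub_cancel,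
          Sd_one a (show 1 ≤ N+1 by omega)]
      simp only [Sd_zero']
      split_ifs <;> first | omega | contradiction | ring1 | (simp_all only [true_and, false_and, and_true, and_false, not_true, not_false_iff]; all_goals first | omega | ring1)
  | (M+2) =>
    rw [show M + 2 - 2 = M by omega, show M + 2 - 1 = M + 1 by omega]
    match n with
    | 0 =>
      simp only [Cd, EEd]
      rw [Sdsymm a (M+1) (0+1), Sd_one a (show 1 ≤ M+1 by omega),
          show M + 1 + 2 = M + 2 + 1 by omega]
      simp only [Sd_zero]
      split_ifs <;> first | omega | contradiction | ring1 | (simp_all only [true_and, false_and, and_true, and_false, not_true, not_false_iff]; all_goals first | omega | ring1)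
    | (N+1) =>
      have hS := Skey a M (N+1) (by omega)
      rw [Nat.add_sub_cancel] at hS
      simp only [Cd, EEd]
      rw [Nat.add_sub_cancel]
      by_cases hNM : N = M
      · subst hNM
        split_ifs <;> first | omega | contradiction | ring1 | linear_combination ((-1:ℂ)^(N+1)) * hS | (simp_all only [true_and, false_and, and_true, and_false, not_true, not_false_iff]; all_goals first | omega | ring1 | linear_combination ((-1:ℂ)^(N+1)) * hS)
      · by_cases hNM2 : N = M + 2
        · subst hNM2
          split_ifs <;> first | omega | contradiction | ring1 | linear_combination ((-1:ℂ)^(M+3)) * hS | (simp_all only [true_and, false_and, and_true, and_false, not_true, not_false_iff]; all_goals first | omega | ring1 | linear_combination ((-1:ℂ)^(M+3)) * hS)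
        · split_ifs <;> first | omega | contradiction | ring1 | linear_combination ((-1:ℂ)^(N+1)) * hS | (simp_all only [true_and, false_and, and_true, and_false, not_true, not_false_iff]; all_goals first | omega | ring1 | linear_combination ((-1:ℂ)^(N+1)) * hS)

lemma SW (a : ℕ → ℂ) (m n : ℕ) :
    Sd a m n = ∑ k ∈ (Finset.Icc (max m n - min m n + 1) (m+n+1)).filter
        (fun k => Odd (m+n+k)), a k := by
  have hmm : min m n + max m n = m + n := min_add_max m n
  have hle : min m n ≤ max m n := min_le_max
  unfold Sd
  refine Finset.sum_nbij' (i := fun r => max m n - min m n + 1 + 2*r)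
    (j := fun k => (k - (max m n - min m n + 1))/2) ?_ ?_ ?_ ?_ ?_
  · intro r hr
    simp only [mem_range] at hr
    simp only [mem_filter, mem_Icc, Nat.odd_iff]
    omega
  · intro k hk
    simp only [mem_filter, mem_Icc, Nat.odd_iff] at hk
    simp only [mem_range]
    omega
  · intro r hr
    omega
  · intro k hk
    simp only [mem_filter, mem_Icc, Nat.odd_iff] at hk
    omega
  · intro r hr
    rfl

noncomputable def shd (A : ℕ → ℕ → ℂ) (i j m n : ℕ) : ℂ :=
  if i ≤ m ∧ j ≤ n then A (m-i) (n-j) else 0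

noncomputable def Dd (A : ℕ → ℕ → ℂ) (m n : ℕ) : ℂ :=
  shd A 2 1 m n + shd A 1 2 m n + shd A 1 0 m n + shd A 0 1 m n


theorem taylor_coefficients (a : ℕ → ℂ) (ha0 : a 0 = 0)
    (hasq : Summable (fun k : ℕ => ‖a k‖^2)) (α : ℂ)
    (A : ℕ → ℕ → ℂ)
    (hAsq : Summable (fun p : ℕ × ℕ => ‖A p.1 p.2‖^2))
    (hF : ∀ x y : ℂ, ‖x‖ < 1 → ‖y‖ < 1 → (x + y) * (x*y + 1) ≠ 0 →
      ∑' pq : ℕ × ℕ, A pq.1 pq.2 * x^pq.1 * y^pq.2 =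
        ((∑' k : ℕ, a k * x^k) - (∑' k : ℕ, a k * (-y)^k) + α * y * (x + y)) /
          ((x + y) * (x*y + 1))) :
    (∀ m n : ℕ, A m n = (-1:ℂ)^n * ((if n = m + 1 then α else 0) +
      ∑ k ∈ (Finset.Icc (max m n - min m n + 1) (m+n+1)).filter
        (fun k => Odd (m+n+k)), a k)) ∧
    (∀ l n : ℕ, 1 ≤ l →
      A (n+l) n = (-1:ℂ)^n * ∑ r ∈ Finset.range (n+1), a (l+1+2*r)) := by
  classical
  set Ma := Real.sqrt (∑' k, ‖a k‖^2) with hMadef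
  have hMa : ∀ k, ‖a k‖ ≤ Ma := sq_bound a hasq
  have hMa0 : 0 ≤ Ma := Real.sqrt_nonneg _
  set MA := Real.sqrt (∑' p : ℕ × ℕ, ‖A p.1 p.2‖^2) with hMAdef
  have hMA : ∀ m n, ‖A m n‖ ≤ MA := fun m n => sq_bound (fun p : ℕ × ℕ => A p.1 p.2) hAsq (m, n)
  have hMA0 : 0 ≤ MA := Real.sqrt_nonneg _
  have hshbd : ∀ i j m n, ‖shd A i j m n‖ ≤ MA := by
    intro i j m n
    unfold shd
    split_ifs
    · exact hMA _ _
    · simpa using hMA0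
  have hαn : 0 ≤ ‖α‖ := norm_nonneg _
  have hE1bd : ∀ m n, ‖(if n = 0 then a m else 0 : ℂ)‖ ≤ Ma := by
    intro m n
    split_ifs
    · exact hMa _
    · simpa using hMa0
  have hE2bd : ∀ m n, ‖(if m = 0 then (-1:ℂ)^(n+1) * a n else 0 : ℂ)‖ ≤ Ma := by
    intro m n
    split_ifs
    · rw [norm_mul, norm_pow, norm_neg, norm_one, one_pow, one_mul]; exact hMa _
    · simpa using hMa0
  have hE3bd : ∀ m n, ‖(if m = 1 ∧ n = 1 then α else 0 : ℂ)‖ ≤ ‖α‖ := by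
    intro m n
    split_ifs
    · exact le_refl _
    · simpa using hαn
  have hE4bd : ∀ m n, ‖(if m = 0 ∧ n = 2 then α else 0 : ℂ)‖ ≤ ‖α‖ := by
    intro m n
    split_ifs
    · exact le_refl _
    · simpa using hαn
  have hEbd : ∀ m n, ‖EEd a α m n‖ ≤ Ma + Ma + ‖α‖ + ‖α‖ := by
    intro m n
    unfold EEd
    calc ‖_ + _ + _ + _‖ ≤ ‖_ + _ + _‖ + ‖_‖ := norm_add_le _ _
      _ ≤ (‖_ + _‖ + ‖_‖) + ‖_‖ := by gcongr; exact norm_add_le _ _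
      _ ≤ ((‖_‖ + ‖_‖) + ‖_‖) + ‖_‖ := by gcongr; exact norm_add_le _ _
      _ ≤ Ma + Ma + ‖α‖ + ‖α‖ := by
          gcongr
          exacts [hE1bd m n, hE2bd m n, hE3bd m n, hE4bd m n]
  have hDbd : ∀ m n, ‖Dd A m n‖ ≤ MA + MA + MA + MA := by
    intro m n
    unfold Dd
    calc ‖_ + _ + _ + _‖ ≤ ‖_ + _ + _‖ + ‖_‖ := norm_add_le _ _
      _ ≤ (‖_ + _‖ + ‖_‖) + ‖_‖ := by gcongr; exact norm_add_le _ _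
      _ ≤ ((‖_‖ + ‖_‖) + ‖_‖) + ‖_‖ := by gcongr; exact norm_add_le _ _
      _ ≤ MA + MA + MA + MA := by
          gcongr
          exacts [hshbd 2 1 m n, hshbd 1 2 m n, hshbd 1 0 m n, hshbd 0 1 m n]
  have hcbd : ∀ m n, ‖Dd A m n - EEd a α m n‖ ≤ (MA+MA+MA+MA) + (Ma + Ma + ‖α‖ + ‖α‖) := by
    intro m n
    calc ‖Dd A m n - EEd a α m n‖ ≤ ‖Dd A m n‖ + ‖EEd a α m n‖ := norm_sub_le _ _
      _ ≤ _ := add_le_add (hDbd m n) (hEbd m n)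
  have hzero : ∀ x y : ℂ, ‖x‖ < 1 → ‖y‖ < 1 → x ≠ -y →
      ∑' p : ℕ × ℕ, (Dd A p.1 p.2 - EEd a α p.1 p.2) * x^p.1 * y^p.2 = 0 := by
    intro x y hx hy hxy
    have hden : (x + y) * (x*y + 1) ≠ 0 := by
      apply mul_ne_zero
      · intro h0
        exact hxy (by linear_combination h0)
      · intro h0
        have h1 : x*y = -1 := by linear_combination h0
        have h2 : ‖x*y‖ = 1 := by rw [h1, norm_neg, norm_one]
        rw [norm_mul] at h2
        nlinarith [norm_nonneg x, norm_nonneg y]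
    have hg := hF x y hx hy hden
    have hs21 : Summable (fun p : ℕ × ℕ => shd A 2 1 p.1 p.2 * x^p.1 * y^p.2) :=
      summable2 _ MA (hshbd 2 1) hx hy
    have hs12 : Summable (fun p : ℕ × ℕ => shd A 1 2 p.1 p.2 * x^p.1 * y^p.2) :=
      summable2 _ MA (hshbd 1 2) hx hy
    have hs10 : Summable (fun p : ℕ × ℕ => shd A 1 0 p.1 p.2 * x^p.1 * y^p.2) :=
      summable2 _ MA (hshbd 1 0) hx hy
    have hs01 : Summable (fun p : ℕ × ℕ => shd A 0 1 p.1 p.2 * x^p.1 * y^p.2) :=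
      summable2 _ MA (hshbd 0 1) hx hy
    have hsE1 : Summable (fun p : ℕ × ℕ => (if p.2 = 0 then a p.1 else 0) * x^p.1 * y^p.2) :=
      summable2 (fun m n => if n = 0 then a m else 0) Ma hE1bd hx hy
    have hsE2 : Summable (fun p : ℕ × ℕ => (if p.1 = 0 then (-1:ℂ)^(p.2+1) * a p.2 else 0) * x^p.1 * y^p.2) :=
      summable2 (fun m n => if m = 0 then (-1:ℂ)^(n+1) * a n else 0) Ma hE2bd hx hy
    have hsE3 : Summable (fun p : ℕ × ℕ => (if p.1 = 1 ∧ p.2 = 1 then α else 0) * x^p.1 * y^p.2) :=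
      summable2 (fun m n => if m = 1 ∧ n = 1 then α else 0) ‖α‖ hE3bd hx hy
    have hsE4 : Summable (fun p : ℕ × ℕ => (if p.1 = 0 ∧ p.2 = 2 then α else 0) * x^p.1 * y^p.2) :=
      summable2 (fun m n => if m = 0 ∧ n = 2 then α else 0) ‖α‖ hE4bd hx hy
    have hDsum : ∑' p : ℕ × ℕ, Dd A p.1 p.2 * x^p.1 * y^p.2
        = (x+y)*(x*y+1) * ∑' p : ℕ × ℕ, A p.1 p.2 * x^p.1 * y^p.2 := by
      have hdist : ∀ p : ℕ × ℕ, Dd A p.1 p.2 * x^p.1 * y^p.2 =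
          (shd A 2 1 p.1 p.2 * x^p.1 * y^p.2 + shd A 1 2 p.1 p.2 * x^p.1 * y^p.2 +
           shd A 1 0 p.1 p.2 * x^p.1 * y^p.2) + shd A 0 1 p.1 p.2 * x^p.1 * y^p.2 := by
        intro p; unfold Dd; ring
      rw [tsum_congr hdist, Summable.tsum_add ((hs21.add hs12).add hs10) hs01,
          Summable.tsum_add (hs21.add hs12) hs10, Summable.tsum_add hs21 hs12]
      have e21 := tsum_shift2 A x y 2 1
      have e12 := tsum_shift2 A x y 1 2
      have e10 := tsum_shift2 A x y 1 0
      have e01 := tsum_shift2 A x y 0 1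
      rw [show (fun p : ℕ × ℕ => shd A 2 1 p.1 p.2 * x^p.1 * y^p.2) =
          (fun p : ℕ × ℕ => (if 2 ≤ p.1 ∧ 1 ≤ p.2 then A (p.1-2) (p.2-1) else 0) * x^p.1 * y^p.2) from rfl,
          show (fun p : ℕ × ℕ => shd A 1 2 p.1 p.2 * x^p.1 * y^p.2) =
          (fun p : ℕ × ℕ => (if 1 ≤ p.1 ∧ 2 ≤ p.2 then A (p.1-1) (p.2-2) else 0) * x^p.1 * y^p.2) from rfl,
          show (fun p : ℕ × ℕ => shd A 1 0 p.1 p.2 * x^p.1 * y^p.2) =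
          (fun p : ℕ × ℕ => (if 1 ≤ p.1 ∧ 0 ≤ p.2 then A (p.1-1) (p.2-0) else 0) * x^p.1 * y^p.2) from rfl,
          show (fun p : ℕ × ℕ => shd A 0 1 p.1 p.2 * x^p.1 * y^p.2) =
          (fun p : ℕ × ℕ => (if 0 ≤ p.1 ∧ 1 ≤ p.2 then A (p.1-0) (p.2-1) else 0) * x^p.1 * y^p.2) from rfl,
          e21, e12, e10, e01]
      ring
    have hEsum : ∑' p : ℕ × ℕ, EEd a α p.1 p.2 * x^p.1 * y^p.2
        = (∑' k : ℕ, a k * x^k) - (∑' k : ℕ, a k * (-y)^k) + α * y * (x + y) := by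
      have hdist : ∀ p : ℕ × ℕ, EEd a α p.1 p.2 * x^p.1 * y^p.2 =
          ((if p.2 = 0 then a p.1 else 0) * x^p.1 * y^p.2 +
           (if p.1 = 0 then (-1:ℂ)^(p.2+1) * a p.2 else 0) * x^p.1 * y^p.2 +
           (if p.1 = 1 ∧ p.2 = 1 then α else 0) * x^p.1 * y^p.2) +
          (if p.1 = 0 ∧ p.2 = 2 then α else 0) * x^p.1 * y^p.2 := by
        intro p; unfold EEd; ring
      rw [tsum_congr hdist, Summable.tsum_add ((hsE1.add hsE2).add hsE3) hsE4,
          Summable.tsum_add (hsE1.add hsE2) hsE3, Summable.tsum_add hsE1 hsE2]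
      rw [tsum_axis1 a x y, tsum_axis2 (fun k => (-1:ℂ)^(k+1) * a k) x y,
          tsum_point 1 1 α x y, tsum_point 0 2 α x y]
      have hneg : ∑' k : ℕ, ((-1:ℂ)^(k+1) * a k) * y^k = - ∑' k : ℕ, a k * (-y)^k := by
        rw [← tsum_neg]
        apply tsum_congr
        intro k
        rw [neg_pow]
        ring
      rw [hneg]
      ring
    have hsDt : Summable (fun p : ℕ × ℕ => Dd A p.1 p.2 * x^p.1 * y^p.2) :=
      summable2 (Dd A) (MA+MA+MA+MA) hDbd hx hy
    have hsEt : Summable (fun p : ℕ × ℕ => EEd a α p.1 p.2 * x^p.1 * y^p.2) :=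
      summable2 (EEd a α) (Ma + Ma + ‖α‖ + ‖α‖) hEbd hx hy
    have hdist2 : ∀ p : ℕ × ℕ, (Dd A p.1 p.2 - EEd a α p.1 p.2) * x^p.1 * y^p.2 =
        Dd A p.1 p.2 * x^p.1 * y^p.2 - EEd a α p.1 p.2 * x^p.1 * y^p.2 := by
      intro p; ring
    rw [tsum_congr hdist2, Summable.tsum_sub hsDt hsEt, hDsum, hEsum, hg]
    rw [mul_div_cancel₀ _ hden, sub_self]
  have R : ∀ m n, Dd A m n = EEd a α m n := fun m n => sub_eq_zero.mp (vanish2 (fun m n => Dd A m n - EEd a α m n) _ hcbd hzero m n)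
  have key : ∀ m n, A m n = Cd a α m n := by
    intro m
    induction m using Nat.strong_induction_on with
    | _ m ih =>
    intro n
    have hR := R m (n+1)
    unfold Dd at hR
    have e21 : shd A 2 1 m (n+1) = (if 2 ≤ m then Cd a α (m-2) n else 0) := by
      unfold shd
      by_cases h : 2 ≤ m
      · rw [if_pos ⟨h, by omega⟩, if_pos h, Nat.add_sub_cancel]
        exact ih (m-2) (by omega) n
      · rw [if_neg (by omega), if_neg h]
    have e12 : shd A 1 2 m (n+1) = (if 1 ≤ m ∧ 1 ≤ n then Cd a α (m-1) (n-1) else 0) := by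
      unfold shd
      by_cases h : 1 ≤ m ∧ 1 ≤ n
      · rw [if_pos ⟨h.1, by omega⟩, if_pos h, show n+1-2 = n-1 by omega]
        exact ih (m-1) (by omega) _
      · by_cases h1 : 1 ≤ m
        · have h2 : ¬(1 ≤ n) := by tauto
          rw [if_neg (by omega), if_neg h]
        · rw [if_neg (by omega), if_neg h]
    have e10 : shd A 1 0 m (n+1) = (if 1 ≤ m then Cd a α (m-1) (n+1) else 0) := by
      unfold shd
      by_cases h : 1 ≤ m
      · rw [if_pos ⟨h, by omega⟩, if_pos h, Nat.sub_zero]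
        exact ih (m-1) (by omega) _
      · rw [if_neg (by omega), if_neg h]
    have e01 : shd A 0 1 m (n+1) = A m n := by
      unfold shd
      rw [if_pos ⟨Nat.zero_le _, by omega⟩, Nat.sub_zero, Nat.add_sub_cancel]
    rw [e21, e12, e10, e01] at hR
    have hC := Cid a α m n
    linear_combination hR - hC
  -- alpha = 0
  have hα : α = 0 := by
    have hinj1 : Function.Injective (fun m : ℕ => ((m+1, m) : ℕ × ℕ)) := by
      intro p q h
      simpa [Prod.ext_iff] using h
    have hinj2 : Function.Injective (fun m : ℕ => ((m, m+1) : ℕ × ℕ)) := by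
      intro p q h
      simpa [Prod.ext_iff] using h
    have hs1 : Summable (fun m => ‖A (m+1) m‖^2) :=
      (hAsq.comp_injective hinj1).congr (fun m => rfl)
    have hs2 : Summable (fun m => ‖A m (m+1)‖^2) :=
      (hAsq.comp_injective hinj2).congr (fun m => rfl)
    have ht1 : Tendsto (fun m => ‖A (m+1) m‖) atTop (nhds 0) := by
      have h2 := hs1.tendsto_atTop_zero
      have h3 := h2.sqrt
      simp only [Real.sqrt_sq (norm_nonneg _), Real.sqrt_zero] at h3
      exact h3
    have ht2 : Tendsto (fun m => ‖A m (m+1)‖) atTop (nhds 0) := by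
      have h2 := hs2.tendsto_atTop_zero
      have h3 := h2.sqrt
      simp only [Real.sqrt_sq (norm_nonneg _), Real.sqrt_zero] at h3
      exact h3
    have hv1 : ∀ m, ‖A (m+1) m‖ = ‖Sd a (m+1) m‖ := by
      intro m
      rw [key, Cd, if_neg (by omega), add_zero, norm_mul, norm_pow, norm_neg, norm_one,
        one_pow, one_mul]
    have hv2 : ∀ m, ‖A m (m+1)‖ = ‖α - Sd a (m+1) m‖ := by
      intro m
      rw [key, Cd, if_pos rfl, Sdsymm a m (m+1)]
      rw [show (-1:ℂ)^(m+1) * Sd a (m+1) m + (-1:ℂ)^m * α = (-1:ℂ)^m * (α - Sd a (m+1) m) by ring]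
      rw [norm_mul, norm_pow, norm_neg, norm_one, one_pow, one_mul]
    rw [funext hv1] at ht1
    rw [funext hv2] at ht2
    have hsum : Tendsto (fun m => ‖α - Sd a (m+1) m‖ + ‖Sd a (m+1) m‖) atTop (nhds (0+0)) :=
      ht2.add ht1
    rw [add_zero] at hsum
    have hle : ∀ m, ‖α‖ ≤ ‖α - Sd a (m+1) m‖ + ‖Sd a (m+1) m‖ := by
      intro m
      calc ‖α‖ = ‖(α - Sd a (m+1) m) + Sd a (m+1) m‖ := by ring_nf
        _ ≤ _ := norm_add_le _ _
    have : ‖α‖ ≤ 0 := ge_of_tendsto' hsum hle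
    exact norm_le_zero_iff.mp this
  constructor
  · intro m n
    rw [key m n]
    unfold Cd
    rw [SW a m n, hα]
    simp only [mul_zero, ite_self, add_zero, zero_add]
  · intro l n hl
    rw [key, Cd]
    rw [if_neg (by omega : ¬(n = n + l + 1))]
    rw [Sdge a (by omega : n ≤ n + l)]
    have e : ∀ r, n + l - n + 1 + 2*r = l+1+2*r := fun r => by omega
    simp only [e]
    rw [add_zero]
end
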